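/- (Leaf-addressing property of CQ normal forms) Let F be a term in CQ normal form, viewed as a binary tree built from pairing ⟨-,-⟩ with a shift at each leaf. If the shift S, read from left to right as a word in L and R, describes the position of a leaf of the tree of F at which the shift S' resides, then the CQ normal form of S*F is S', and for no proper initial segment S'' of S is the CQ normal form of S''*F a shift. -/
import Mathlib


/-- Terms of the free (quasi-)Cartesian monoid: constants `I, L, R`,
composition `comp` (written `*` in the paper) and pairing `pair`. -/
inductive Term : Type
  | I : Term
  | L : Term
  | R : Term
  | comp : Term → Term → Term
  | pair : Term → Term → Term
  deriving DecidableEq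

open Term

/-- The rewrite rules (1)-(7), indexed by their number. -/
inductive Rule : ℕ → Term → Term → Prop
  | r1 (x y : Term) : Rule 1 (comp L (pair x y)) x
  | r2 (x y : Term) : Rule 2 (comp R (pair x y)) y
  | r3 (x y z : Term) : Rule 3 (comp (pair x y) z) (pair (comp x z) (comp y z))
  | r4 (x : Term) : Rule 4 (comp I x) x
  | r5 (x : Term) : Rule 5 (comp x I) x
  | r6 (x : Term) : Rule 6 (pair (comp L x) (comp R x)) x
  | r7 : Rule 7 (pair L R) I

/-- The congruence generated by associativity of `comp`. -/
inductive AssocEq : Term → Term → Prop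
  | assoc (a b c : Term) : AssocEq (comp (comp a b) c) (comp a (comp b c))
  | refl (a : Term) : AssocEq a a
  | symm {a b : Term} : AssocEq a b → AssocEq b a
  | trans {a b c : Term} : AssocEq a b → AssocEq b c → AssocEq a c
  | comp_congr {a a' b b' : Term} :
      AssocEq a a' → AssocEq b b' → AssocEq (comp a b) (comp a' b')
  | pair_congr {a a' b b' : Term} :
      AssocEq a a' → AssocEq b b' → AssocEq (pair a b) (pair a' b')

/-- One-step rewriting by a rule whose index lies in `J`,
closed under replacement of subterms (monotone closure). -/
inductive Step (J : Set ℕ) : Term → Term → Prop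
  | rule {n : ℕ} {x y : Term} : n ∈ J → Rule n x y → Step J x y
  | comp_left {a a' b : Term} : Step J a a' → Step J (comp a b) (comp a' b)
  | comp_right {a b b' : Term} : Step J b b' → Step J (comp a b) (comp a b')
  | pair_left {a a' b : Term} : Step J a a' → Step J (pair a b) (pair a' b)
  | pair_right {a b b' : Term} : Step J b b' → Step J (pair a b) (pair a b')

/-- One-step rewriting modulo associativity. -/
def StepA (J : Set ℕ) (a b : Term) : Prop :=
  ∃ a' b', AssocEq a a' ∧ Step J a' b' ∧ AssocEq b' b

/-- Many-step rewriting `↠_J`: the monotone reflexive transitive closure of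
one-step rewriting by the rules in `J`, modulo associativity. -/
def Red (J : Set ℕ) (a b : Term) : Prop :=
  ∃ c, Relation.ReflTransGen (StepA J) a c ∧ AssocEq c b

/-- `a` is in normal form w.r.t. the rules in `J` (modulo associativity). -/
def NF (J : Set ℕ) (a : Term) : Prop := ∀ b, ¬ StepA J a b

/-- Rules (1)-(7). -/
def rules17 : Set ℕ := {n | 1 ≤ n ∧ n ≤ 7}
/-- Rules (1)-(5). -/
def rules15 : Set ℕ := {n | 1 ≤ n ∧ n ≤ 5}
/-- Rules (1)-(4). -/
def rules14 : Set ℕ := {n | 1 ≤ n ∧ n ≤ 4}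
/-- Rules (5), (6), (7). -/
def rules567 : Set ℕ := {5, 6, 7}

/-- The congruence `=_CM` generated by the Cartesian monoid axioms (i)-(iv)
and the monoid axioms for `comp` with unit `I`. -/
inductive CMEq : Term → Term → Prop
  | proj_left (f g : Term) : CMEq (comp L (pair f g)) f
  | proj_right (f g : Term) : CMEq (comp R (pair f g)) g
  | lift (f g h : Term) : CMEq (comp (pair f g) h) (pair (comp f h) (comp g h))
  | surj : CMEq (pair L R) I
  | assoc (a b c : Term) : CMEq (comp (comp a b) c) (comp a (comp b c))
  | one_mul (a : Term) : CMEq (comp I a) a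
  | mul_one (a : Term) : CMEq (comp a I) a
  | refl (a : Term) : CMEq a a
  | symm {a b : Term} : CMEq a b → CMEq b a
  | trans {a b c : Term} : CMEq a b → CMEq b c → CMEq a c
  | comp_congr {a a' b b' : Term} :
      CMEq a a' → CMEq b b' → CMEq (comp a b) (comp a' b')
  | pair_congr {a a' b b' : Term} :
      CMEq a a' → CMEq b b' → CMEq (pair a b) (pair a' b')

/-- The congruence `=_CQ` generated by the axioms (i)-(iii)
and the monoid axioms (no surjectivity `⟨L,R⟩ = I`). -/
inductive CQEq : Term → Term → Prop
  | proj_left (f g : Term) : CQEq (comp L (pair f g)) f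
  | proj_right (f g : Term) : CQEq (comp R (pair f g)) g
  | lift (f g h : Term) : CQEq (comp (pair f g) h) (pair (comp f h) (comp g h))
  | assoc (a b c : Term) : CQEq (comp (comp a b) c) (comp a (comp b c))
  | one_mul (a : Term) : CQEq (comp I a) a
  | mul_one (a : Term) : CQEq (comp a I) a
  | refl (a : Term) : CQEq a a
  | symm {a b : Term} : CQEq a b → CQEq b a
  | trans {a b c : Term} : CQEq a b → CQEq b c → CQEq a c
  | comp_congr {a a' b b' : Term} :
      CQEq a a' → CQEq b b' → CQEq (comp a b) (comp a' b')
  | pair_congr {a a' b b' : Term} :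
      CQEq a a' → CQEq b b' → CQEq (pair a b) (pair a' b')

/-- An injective numerical encoding of terms, used to state computability. -/
def encodeTerm : Term → ℕ
  | I => 0
  | L => 1
  | R => 2
  | comp a b => 2 * Nat.pair (encodeTerm a) (encodeTerm b) + 3
  | pair a b => 2 * Nat.pair (encodeTerm a) (encodeTerm b) + 4

/-- A numerical encoding of finite lists of terms. -/
def encodeTermList : List Term → ℕ
  | [] => 0
  | a :: l => Nat.pair (encodeTerm a) (encodeTermList l) + 1

/-- The product of a list of terms (with `I` as the empty product). -/
def listProd : List Term → Term
  | [] => I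
  | a :: l => comp a (listProd l)

/-- `=_CQ` as a setoid. -/
def cqSetoid : Setoid Term :=
  ⟨CQEq, ⟨fun a => CQEq.refl a, fun h => h.symm, fun h₁ h₂ => h₁.trans h₂⟩⟩

/-- The free categorical quasiproduct monoid `CQ = T / =_CQ`. -/
def CQ : Type := Quotient cqSetoid

/-- `=_CM` as a setoid. -/
def cmSetoid : Setoid Term :=
  ⟨CMEq, ⟨fun a => CMEq.refl a, fun h => h.symm, fun h₁ h₂ => h₁.trans h₂⟩⟩

/-- The free Cartesian monoid `CM = T / =_CM`. -/
def CM : Type := Quotient cmSetoid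

/-- The submonoid of `CQ` generated by (the classes of) the members of `B`,
as a set of elements of `CQ`. -/
def genSubmonoidCQ (B : List Term) : Set CQ :=
  {x | ∃ l : List Term, (∀ t ∈ l, t ∈ B) ∧ Quotient.mk cqSetoid (listProd l) = x}

/-- The submonoid of `CM` generated by (the classes of) the members of `B`,
as a set of elements of `CM`. -/
def genSubmonoidCM (B : List Term) : Set CM :=
  {x | ∃ l : List Term, (∀ t ∈ l, t ∈ B) ∧ Quotient.mk cmSetoid (listProd l) = x}

/-- A shift: a product (under `comp`) of copies of `L` and `R`,
with `I` as the empty product. -/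
inductive IsShift : Term → Prop
  | unit : IsShift I
  | left : IsShift L
  | right : IsShift R
  | comp {s t : Term} : IsShift s → IsShift t → IsShift (comp s t)

/-- The CQ normal form (normal form w.r.t. rules (1)-(5)) of `X` is a shift. -/
def nfIsShift (X : Term) : Prop :=
  ∃ N, Red rules15 X N ∧ NF rules15 N ∧ IsShift N

/-- The product `F_0 * ⋯ * F_{n-1}` of the first `n` values of a sequence. -/
def prodTake (f : ℕ → Term) (n : ℕ) : Term := listProd ((List.range n).map f)

/-- `B` covers Cantor space: there is an infinite sequence of members of `B`
such that for each shift `S` some finite initial product composed with `S`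
has a CQ normal form that is not a shift. -/
def Covers (B : List Term) : Prop :=
  ∃ f : ℕ → Term, (∀ n, f n ∈ B) ∧
    ∀ S, IsShift S → ∃ n, ¬ nfIsShift (comp S (prodTake f n))

/-- The shift `S` is bad for `B`: for every finite sequence of members of `B`,
the CQ normal form of `S*F_1*⋯*F_n` is a shift. -/
def BadFor (B : List Term) (S : Term) : Prop :=
  ∀ l : List Term, (∀ t ∈ l, t ∈ B) → nfIsShift (comp S (listProd l))

/-- The length of a shift: the number of occurrences of `L` and `R`. -/
def lenLR : Term → ℕ
  | I => 0
  | L => 1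
  | R => 1
  | comp a b => lenLR a + lenLR b
  | pair a b => lenLR a + lenLR b

/-- `S` is extenuative for `B`: it is bad for `B` and the CQ normal forms of
`S*F_1*⋯*F_k` (for `F_i` in `B`) have unbounded length. -/
def Extenuative (B : List Term) (S : Term) : Prop :=
  BadFor B S ∧ ∀ n : ℕ, ∃ l : List Term, (∀ t ∈ l, t ∈ B) ∧
    ∃ N, Red rules15 (comp S (listProd l)) N ∧ NF rules15 N ∧ n ≤ lenLR N

/-- A term represents a right invertible element of CM. -/
def RightInvCM (F : Term) : Prop := ∃ G, CMEq (comp F G) I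

/-- `LeafAt w F S'` : reading the path `w` from the root of the binary tree of
`F` (`false` selects the left component of a pair, `true` the right one) leads
to a leaf at which the shift `S'` resides. -/
inductive LeafAt : List Bool → Term → Term → Prop
  | leaf {S' : Term} : IsShift S' → LeafAt [] S' S'
  | left {w : List Bool} {a S' : Term} (b : Term) :
      LeafAt w a S' → LeafAt (false :: w) (Term.pair a b) S'
  | right {w : List Bool} {b S' : Term} (a : Term) :
      LeafAt w b S' → LeafAt (true :: w) (Term.pair a b) S'

/-- The shift describing the leaf position `w`: the letters of the path
(`false ↦ L`, `true ↦ R`) composed so that the root step acts first. -/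
def pathShift : List Bool → Term
  | [] => Term.I
  | d :: w => Term.comp (pathShift w) (if d then Term.R else Term.L)

namespace LeafAddr

/-- Composition of normal forms. -/
def cmp : Term → Term → Term
  | I, y => y
  | comp a b, z => cmp a (cmp b z)
  | pair a b, z => pair (cmp a z) (cmp b z)
  | L, pair a _ => a
  | R, pair _ b => b
  | x, I => x
  | L, y => comp L y
  | R, y => comp R y

/-- A normalization function for rules (1)-(5) modulo associativity. -/
def nf : Term → Term
  | I => I
  | L => L
  | R => R
  | comp a b => cmp (nf a) (nf b)
  | pair a b => pair (nf a) (nf b)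

theorem cmp_assoc : ∀ x y z : Term, cmp (cmp x y) z = cmp x (cmp y z)
  | I, _, _ => by simp [cmp]
  | comp a b, y, z => by simp [cmp, cmp_assoc a, cmp_assoc b]
  | pair a b, y, z => by simp [cmp, cmp_assoc a, cmp_assoc b]
  | L, I, z => by simp [cmp]
  | L, L, z => by simp [cmp]
  | L, R, z => by simp [cmp]
  | L, comp a b, z => by simp [cmp]
  | L, pair a b, z => by simp [cmp]
  | R, I, z => by simp [cmp]
  | R, L, z => by simp [cmp]
  | R, R, z => by simp [cmp]
  | R, comp a b, z => by simp [cmp]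
  | R, pair a b, z => by simp [cmp]

theorem cmp_nf_I : ∀ x : Term, cmp (nf x) I = nf x
  | I => by simp [nf, cmp]
  | L => by simp [nf, cmp]
  | R => by simp [nf, cmp]
  | comp a b => by simp [nf, cmp_assoc, cmp_nf_I b]
  | pair a b => by simp [nf, cmp, cmp_nf_I a, cmp_nf_I b]

theorem nf_assocEq {a b : Term} (h : AssocEq a b) : nf a = nf b := by
  induction h with
  | assoc a b c => simp [nf, cmp_assoc]
  | refl => rfl
  | symm _ ih => exact ih.symm
  | trans _ _ ih1 ih2 => exact ih1.trans ih2
  | comp_congr _ _ ih1 ih2 => simp [nf, ih1, ih2]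
  | pair_congr _ _ ih1 ih2 => simp [nf, ih1, ih2]

theorem nf_rule {n : ℕ} {x y : Term} (hn : n ∈ rules15) (h : Rule n x y) :
    nf x = nf y := by
  cases h with
  | r1 => simp [nf, cmp]
  | r2 => simp [nf, cmp]
  | r3 => simp [nf, cmp]
  | r4 => simp [nf, cmp]
  | r5 => simp only [nf]; exact cmp_nf_I _
  | r6 z => exact absurd hn.2 (by norm_num)
  | r7 => exact absurd hn.2 (by norm_num)

theorem nf_step {a b : Term} (h : Step rules15 a b) : nf a = nf b := by
  induction h with
  | rule hn hr => exact nf_rule hn hr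
  | comp_left _ ih => simp [nf, ih]
  | comp_right _ ih => simp [nf, ih]
  | pair_left _ ih => simp [nf, ih]
  | pair_right _ ih => simp [nf, ih]

theorem nf_stepA {a b : Term} (h : StepA rules15 a b) : nf a = nf b := by
  obtain ⟨a', b', h1, h2, h3⟩ := h
  exact (nf_assocEq h1).trans ((nf_step h2).trans (nf_assocEq h3))

theorem nf_red {a b : Term} (h : Red rules15 a b) : nf a = nf b := by
  obtain ⟨c, h1, h2⟩ := h
  have key : nf a = nf c := by
    clear h2
    induction h1 with
    | refl => rfl
    | tail _ s ih => exact ih.trans (nf_stepA s)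
  exact key.trans (nf_assocEq h2)

/-- A term containing no pairing. -/
def PairFree : Term → Prop
  | I => True
  | L => True
  | R => True
  | comp a b => PairFree a ∧ PairFree b
  | pair _ _ => False

theorem pairFree_cmp : ∀ x y : Term, PairFree x → PairFree y → PairFree (cmp x y)
  | I, y, _, hy => by simpa [cmp] using hy
  | comp a b, z, hx, hz => by
      have := pairFree_cmp a (cmp b z) hx.1 (pairFree_cmp b z hx.2 hz)
      simpa [cmp] using this
  | pair _ _, _, hx, _ => hx.elim
  | L, I, _, _ => by simp [cmp, PairFree]
  | L, L, _, _ => by simp [cmp, PairFree]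
  | L, R, _, _ => by simp [cmp, PairFree]
  | L, comp a b, _, hy => by simpa [cmp, PairFree] using hy
  | L, pair _ _, _, hy => by simp [PairFree] at hy
  | R, I, _, _ => by simp [cmp, PairFree]
  | R, L, _, _ => by simp [cmp, PairFree]
  | R, R, _, _ => by simp [cmp, PairFree]
  | R, comp a b, _, hy => by simpa [cmp, PairFree] using hy
  | R, pair _ _, _, hy => by simp [PairFree] at hy

theorem pairFree_nf_shift {S : Term} (h : IsShift S) : PairFree (nf S) := by
  induction h with
  | unit => simp [nf, PairFree]
  | left => simp [nf, PairFree]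
  | right => simp [nf, PairFree]
  | comp hs ht ihs iht => exact pairFree_cmp _ _ ihs iht

theorem red_of_stepA {J : Set ℕ} {a b : Term} (h : StepA J a b) : Red J a b :=
  ⟨b, Relation.ReflTransGen.single h, AssocEq.refl b⟩

theorem red_head {J : Set ℕ} {a b c : Term} (h : StepA J a b) (h2 : Red J b c) :
    Red J a c := by
  obtain ⟨d, h3, h4⟩ := h2
  exact ⟨d, h3.head h, h4⟩

theorem mem1 : (1 : ℕ) ∈ rules15 := ⟨le_refl 1, by norm_num⟩
theorem mem2 : (2 : ℕ) ∈ rules15 := ⟨by norm_num, by norm_num⟩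
theorem mem4 : (4 : ℕ) ∈ rules15 := ⟨by norm_num, by norm_num⟩

theorem stepA_I (F : Term) : StepA rules15 (comp I F) F :=
  ⟨comp I F, F, AssocEq.refl _, Step.rule mem4 (Rule.r4 F), AssocEq.refl _⟩

theorem stepA_left (P a b : Term) :
    StepA rules15 (comp (comp P L) (pair a b)) (comp P a) :=
  ⟨comp P (comp L (pair a b)), comp P a, AssocEq.assoc _ _ _,
    Step.comp_right (Step.rule mem1 (Rule.r1 a b)), AssocEq.refl _⟩

theorem stepA_right (P a b : Term) :
    StepA rules15 (comp (comp P R) (pair a b)) (comp P b) :=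
  ⟨comp P (comp R (pair a b)), comp P b, AssocEq.assoc _ _ _,
    Step.comp_right (Step.rule mem2 (Rule.r2 a b)), AssocEq.refl _⟩

theorem red_leaf : ∀ {w : List Bool} {F S' : Term}, LeafAt w F S' →
    Red rules15 (comp (pathShift w) F) S' := by
  intro w F S' h
  induction h with
  | leaf hs => exact red_of_stepA (stepA_I _)
  | left b hl ih => exact red_head (stepA_left _ _ _) ih
  | right a hl ih => exact red_head (stepA_right _ _ _) ih

theorem red_interior : ∀ {w : List Bool} {F S' : Term}, LeafAt w F S' →
    ∀ (w₁ : List Bool) (d : Bool) (w₂ : List Bool), w = w₁ ++ d :: w₂ →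
    ∃ a b, Red rules15 (comp (pathShift w₁) F) (pair a b) := by
  intro w F S' h
  induction h with
  | leaf hs => intro w₁ d w₂ he; exact absurd he (by simp)
  | @left wt a S' b hl ih =>
      intro w₁ d w₂ he
      cases w₁ with
      | nil => exact ⟨a, b, red_of_stepA (stepA_I _)⟩
      | cons e w₁' =>
          rw [List.cons_append, List.cons.injEq] at he
          obtain ⟨he1, he2⟩ := he
          obtain ⟨p, q, hr⟩ := ih w₁' d w₂ he2
          refine ⟨p, q, ?_⟩
          rw [← he1]
          exact red_head (stepA_left _ _ _) hr
  | @right wt b S' a hl ih =>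
      intro w₁ d w₂ he
      cases w₁ with
      | nil => exact ⟨a, b, red_of_stepA (stepA_I _)⟩
      | cons e w₁' =>
          rw [List.cons_append, List.cons.injEq] at he
          obtain ⟨he1, he2⟩ := he
          obtain ⟨p, q, hr⟩ := ih w₁' d w₂ he2
          refine ⟨p, q, ?_⟩
          rw [← he1]
          exact red_head (stepA_right _ _ _) hr

theorem nf_pair_left {J : Set ℕ} {a b : Term} (h : NF J (pair a b)) : NF J a := by
  intro c hc
  obtain ⟨a', c', h1, h2, h3⟩ := hc
  exact h (pair c' b) ⟨pair a' b, pair c' b,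
    AssocEq.pair_congr h1 (AssocEq.refl b), Step.pair_left h2, AssocEq.refl _⟩

theorem nf_pair_right {J : Set ℕ} {a b : Term} (h : NF J (pair a b)) : NF J b := by
  intro c hc
  obtain ⟨b', c', h1, h2, h3⟩ := hc
  exact h (pair a c') ⟨pair a b', pair a c',
    AssocEq.pair_congr (AssocEq.refl a) h1, Step.pair_right h2, AssocEq.refl _⟩

theorem nf_leafAt {w : List Bool} {F S' : Term} (h : LeafAt w F S')
    (hF : NF rules15 F) : NF rules15 S' := by
  induction h with
  | leaf hs => exact hF
  | left b hl ih => exact ih (nf_pair_left hF)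
  | right a hl ih => exact ih (nf_pair_right hF)

end LeafAddr

/-- Leaf-addressing property of CQ normal forms: if `F` is in CQ normal form
and the shift `S = pathShift w` describes the position of a leaf of `F` where
the shift `S'` resides, then the CQ normal form of `S*F` is `S'`, and for no
proper initial segment `w'` of the path is the CQ normal form of
`pathShift w' * F` a shift. -/

theorem leaf_addressing (F : Term) (w : List Bool) (S' : Term)
    (hF : NF rules15 F) (h : LeafAt w F S') :
    (Red rules15 (comp (pathShift w) F) S' ∧ NF rules15 S') ∧
    ∀ w' : List Bool, w' <+: w → w' ≠ w →
      ¬ nfIsShift (comp (pathShift w') F) := by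
  refine ⟨⟨LeafAddr.red_leaf h, LeafAddr.nf_leafAt h hF⟩, ?_⟩
  intro w' hpre hne hshift
  obtain ⟨t, ht⟩ := hpre
  cases t with
  | nil => exact hne (by simpa using ht)
  | cons d w₂ =>
      obtain ⟨a, b, hred⟩ := LeafAddr.red_interior h w' d w₂ ht.symm
      obtain ⟨N, hN, _, hsh⟩ := hshift
      have h1 := LeafAddr.nf_red hN
      have h2 := LeafAddr.nf_red hred
      have h3 : LeafAddr.PairFree (LeafAddr.nf N) := LeafAddr.pairFree_nf_shift hsh
      rw [← h1, h2] at h3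
      exact h3
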